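/- arXiv:2409.10084 — 5 statements merged into one kernel-verified Lean document; each statement's English description precedes it below -/
import Mathlib

section
/- Let F : ℕ → ℤ → ℤ → ℕ be a sequence of matrices such that for every n, F n (i+1) (j+1) = F n i j for all i, j ∈ ℤ and every row {j | F n i j ≠ 0} is finite, and let r n = ∑ᶠ j, F n 0 j denote the common row sum of F n. Define the height vectors H : ℕ → ℤ → ℕ by H 0 j = 1 for all j and H (n+1) i = ∑ᶠ j, (F n i j) * (H n j). Then for every n ∈ ℕ and every j ∈ ℤ, H n j = ∏_{l ∈ Finset.range n} r l. -/
lemma shiftF (F : ℕ → ℤ → ℤ → ℕ)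
    (hF : ∀ n : ℕ, ∀ i j : ℤ, F n (i + 1) (j + 1) = F n i j) (n : ℕ) :
    ∀ k i j : ℤ, F n (i + k) (j + k) = F n i j := by
  intro k
  induction k using Int.induction_on with
  | zero => simp
  | succ k ih =>
      intro i j
      have := hF n (i + k) (j + k)
      rw [show i + (k + 1 : ℤ) = i + k + 1 by ring, show j + (k + 1 : ℤ) = j + k + 1 by ring,
        this, ih]
  | pred k ih =>
      intro i j
      have := hF n (i + (-(k:ℤ) - 1)) (j + (-(k:ℤ) - 1))
      rw [show i + (-(k:ℤ) - 1) + 1 = i + -(k:ℤ) by ring,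
        show j + (-(k:ℤ) - 1) + 1 = j + -(k:ℤ) by ring] at this
      rw [← this, ih]

theorem heights_of_horizontally_stationary (F : ℕ → ℤ → ℤ → ℕ)
    (hF : ∀ n : ℕ, ∀ i j : ℤ, F n (i + 1) (j + 1) = F n i j)
    (hfin : ∀ n : ℕ, ∀ i : ℤ, {j : ℤ | F n i j ≠ 0}.Finite)
    (r : ℕ → ℕ) (hr : ∀ n : ℕ, r n = ∑ᶠ j : ℤ, F n 0 j)
    (H : ℕ → ℤ → ℕ)
    (hH0 : ∀ j : ℤ, H 0 j = 1)
    (hHrec : ∀ n : ℕ, ∀ i : ℤ, H (n + 1) i = ∑ᶠ j : ℤ, F n i j * H n j) :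
    ∀ n : ℕ, ∀ j : ℤ, H n j = ∏ l ∈ Finset.range n, r l := by
  intro n
  induction n with
  | zero => intro j; simp [hH0]
  | succ n ih =>
      intro i
      rw [hHrec n i]
      have h1 : ∑ᶠ j : ℤ, F n i j * H n j = ∑ᶠ j : ℤ, F n i j * ∏ l ∈ Finset.range n, r l := by
        apply finsum_congr; intro j; rw [ih j]
      rw [h1, ← finsum_mul _ _, Finset.prod_range_succ, hr n, mul_comm]
      congr 1
      exact finsum_comp_equiv (Equiv.addRight i) (f := fun j => F n i j) ▸
        finsum_congr (fun j => by
          have := shiftF F hF n i 0 j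
          simp only [zero_add] at this
          rw [show (Equiv.addRight i) j = j + i from rfl, this])
end

section
/- Let F : ℕ → ℤ → ℤ → ℕ be such that for every n, F n (i+1) (j+1) = F n i j for all i, j ∈ ℤ and every row {j | F n i j ≠ 0} is finite. Let i, i' : ℕ → ℤ be sequences with F n (i (n+1)) (i n) > 0 and F n (i' (n+1)) (i' n) > 0 for all n. Define σ n = (∑ᶠ j, F n (i (n+1)) j) - F n (i (n+1)) (i n) and σ' n = (∑ᶠ j, F n (i' (n+1)) j) - F n (i' (n+1)) (i' n). Assume the function n ↦ (σ n : ℝ) / (F n (i (n+1)) (i n)) is summable. Then the function n ↦ (σ' n : ℝ) / (F n (i' (n+1)) (i' n)) is summable if and only if there exist k ∈ ℤ and N ∈ ℕ such that i' n = i n + k for all n ≥ N. -/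
open Filter Function

private lemma toeplitz_eq (F : ℕ → ℤ → ℤ → ℕ)
    (hF : ∀ n : ℕ, ∀ i j : ℤ, F n (i + 1) (j + 1) = F n i j) (n : ℕ) :
    ∀ b a : ℤ, F n a b = F n (a - b) 0 := by
  intro b
  induction b using Int.induction_on with
  | zero => simp
  | succ k ih =>
      intro a
      have h1 := hF n (a - 1) (k : ℤ)
      have ha : a - 1 + 1 = a := by ring
      rw [ha] at h1
      rw [h1, ih (a - 1)]
      congr 1; ring
  | pred k ih =>
      intro a
      have h1 := hF n a (-(k : ℤ) - 1)
      have hb : -(k : ℤ) - 1 + 1 = -(k : ℤ) := by ring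
      rw [hb] at h1
      rw [← h1, ih (a + 1)]
      congr 1; ring

private lemma two_le_finsum (f : ℤ → ℕ) (hf : (Function.support f).Finite) {a b : ℤ}
    (hab : a ≠ b) : f a + f b ≤ ∑ᶠ x, f x := by
  classical
  have hsub : Function.support f ⊆ ↑(hf.toFinset ∪ {a, b}) := by
    intro x hx
    have hx' : f x ≠ 0 := hx
    simp [hx']
  rw [finsum_eq_sum_of_support_subset f hsub]
  calc f a + f b = ∑ x ∈ ({a, b} : Finset ℤ), f x := (Finset.sum_pair hab).symm
    _ ≤ _ := Finset.sum_le_sum_of_subset Finset.subset_union_right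

theorem tail_parallel_iff_finite_extension (F : ℕ → ℤ → ℤ → ℕ)
    (hF : ∀ n : ℕ, ∀ i j : ℤ, F n (i + 1) (j + 1) = F n i j)
    (hfin : ∀ n : ℕ, ∀ i : ℤ, {j : ℤ | F n i j ≠ 0}.Finite)
    (i i' : ℕ → ℤ)
    (hi : ∀ n : ℕ, 0 < F n (i (n + 1)) (i n))
    (hi' : ∀ n : ℕ, 0 < F n (i' (n + 1)) (i' n))
    (σ σ' : ℕ → ℕ)
    (hσ : ∀ n : ℕ, σ n = (∑ᶠ j : ℤ, F n (i (n + 1)) j) - F n (i (n + 1)) (i n))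
    (hσ' : ∀ n : ℕ, σ' n = (∑ᶠ j : ℤ, F n (i' (n + 1)) j) - F n (i' (n + 1)) (i' n))
    (hsum : Summable fun n : ℕ => (σ n : ℝ) / (F n (i (n + 1)) (i n) : ℝ)) :
    (Summable fun n : ℕ => (σ' n : ℝ) / (F n (i' (n + 1)) (i' n) : ℝ)) ↔
    (∃ (k : ℤ) (N : ℕ), ∀ n ≥ N, i' n = i n + k) := by
  have hT : ∀ n : ℕ, ∀ a b : ℤ, F n a b = F n (a - b) 0 := fun n a b => toeplitz_eq F hF n b a
  set G : ℕ → ℤ → ℕ := fun n d => F n d 0 with hGdef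
  have hsupp : ∀ n, (Function.support (G n)).Finite := by
    intro n
    have h1 : Function.support (G n) ⊆ (fun j => -j) '' {j : ℤ | F n 0 j ≠ 0} := by
      intro d hd
      refine ⟨-d, ?_, by ring⟩
      have : F n 0 (-d) = F n d 0 := by rw [hT n 0 (-d)]; norm_num
      simpa [Set.mem_setOf_eq, this] using hd
    exact ((hfin n 0).image _).subset h1
  -- the row sums are all equal to S n
  set S : ℕ → ℕ := fun n => ∑ᶠ d, G n d with hSdef
  have hrow : ∀ n : ℕ, ∀ r : ℤ, (∑ᶠ j : ℤ, F n r j) = S n := by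
    intro n r
    have h1 : (fun j : ℤ => F n r j) = fun j => G n ((Equiv.subLeft r) j) := by
      funext j; exact hT n r j
    rw [h1]
    exact finsum_comp_equiv (Equiv.subLeft r)
  -- rewrite everything via G
  have hGi : ∀ n : ℕ, F n (i (n + 1)) (i n) = G n (i (n + 1) - i n) := fun n => hT n _ _
  have hGi' : ∀ n : ℕ, F n (i' (n + 1)) (i' n) = G n (i' (n + 1) - i' n) := fun n => hT n _ _
  have hσG : ∀ n : ℕ, σ n = S n - G n (i (n + 1) - i n) := by
    intro n; rw [hσ n, hrow n, hGi n]
  have hσ'G : ∀ n : ℕ, σ' n = S n - G n (i' (n + 1) - i' n) := by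
    intro n; rw [hσ' n, hrow n, hGi' n]
  have hle : ∀ n : ℕ, G n (i (n + 1) - i n) ≤ S n := fun n =>
    single_le_finsum _ (hsupp n) (fun j => Nat.zero_le _)
  have hle' : ∀ n : ℕ, G n (i' (n + 1) - i' n) ≤ S n := fun n =>
    single_le_finsum _ (hsupp n) (fun j => Nat.zero_le _)
  constructor
  · -- forward direction
    intro hsum'
    -- eventually σ n < F n ..., i.e. 2 * G > S
    have hev : ∀ᶠ n in atTop, (σ n : ℝ) / (F n (i (n + 1)) (i n) : ℝ) < 1 :=
      hsum.tendsto_atTop_zero.eventually_lt_const one_pos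
    have hev' : ∀ᶠ n in atTop, (σ' n : ℝ) / (F n (i' (n + 1)) (i' n) : ℝ) < 1 :=
      hsum'.tendsto_atTop_zero.eventually_lt_const one_pos
    obtain ⟨N, hN⟩ := (hev.and hev').exists_forall_of_atTop
    have hkey : ∀ n ≥ N, i' (n + 1) - i' n = i (n + 1) - i n := by
      intro n hn
      obtain ⟨h1, h2⟩ := hN n hn
      have hpos : (0 : ℝ) < (F n (i (n + 1)) (i n) : ℝ) := by exact_mod_cast hi n
      have hpos' : (0 : ℝ) < (F n (i' (n + 1)) (i' n) : ℝ) := by exact_mod_cast hi' n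
      rw [div_lt_one hpos] at h1
      rw [div_lt_one hpos'] at h2
      have hn1 : σ n < F n (i (n + 1)) (i n) := by exact_mod_cast h1
      have hn2 : σ' n < F n (i' (n + 1)) (i' n) := by exact_mod_cast h2
      rw [hσG n, hGi n] at hn1
      rw [hσ'G n, hGi' n] at hn2
      by_contra hne
      have h2s : G n (i' (n + 1) - i' n) + G n (i (n + 1) - i n) ≤ S n :=
        two_le_finsum (G n) (hsupp n) hne
      have hl := hle n
      have hl' := hle' n
      omega
    refine ⟨i' N - i N, N, ?_⟩
    intro n hn
    induction n, hn using Nat.le_induction with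
    | base => ring
    | succ m hm ih =>
        have := hkey m hm
        omega
  · -- backward direction
    rintro ⟨k, N, hk⟩
    rw [← summable_nat_add_iff N] at hsum ⊢
    refine hsum.congr fun n => ?_
    have h1 : i' (n + N) = i (n + N) + k := hk _ (Nat.le_add_left _ _)
    have h2 : i' (n + N + 1) = i (n + N + 1) + k := hk _ (by omega)
    have hd : i' (n + N + 1) - i' (n + N) = i (n + N + 1) - i (n + N) := by omega
    have hFeq : F (n + N) (i' (n + N + 1)) (i' (n + N)) =
        F (n + N) (i (n + N + 1)) (i (n + N)) := by
      rw [hGi (n + N), hGi' (n + N), hd]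
    have hσeq : σ (n + N) = σ' (n + N) := by
      rw [hσG (n + N), hσ'G (n + N), hd]
    rw [hFeq, hσeq]
end

section
/- Let a : ℕ → ℕ with a k ≥ 1 for all k. Define g : ℕ → ℤ → ℕ by g 0 0 = 1 and g 0 j = 0 for j ≠ 0, and g (m+1) j = g m (j-1) + (a m) * (g m j) + g m (j+1). Then for every m ∈ ℕ, g m 0 = ∑_{k, 0 ≤ 2k ≤ m} (Nat.choose (2k) k) * (∑_{S ∈ (Finset.range m).powersetCard (2k)} ∏_{j ∈ (Finset.range m) \ S} a j). -/
open Finset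

private def Wfn (s : ℕ) (j : ℤ) : ℕ :=
  ∑ u ∈ Finset.range (s + 1), if 2 * (u : ℤ) - (s : ℤ) = j then s.choose u else 0

private lemma Wfn_zero (j : ℤ) : Wfn 0 j = if j = 0 then 1 else 0 := by
  simp [Wfn, eq_comm]

private lemma Wfn_succ (s : ℕ) (j : ℤ) : Wfn (s + 1) j = Wfn s (j - 1) + Wfn s (j + 1) := by
  unfold Wfn
  rw [Finset.sum_range_succ'
    (fun u => if 2 * (u : ℤ) - ((s : ℕ) + 1 : ℕ) = j then (s + 1).choose u else 0)]
  have h1 : ∀ u : ℕ,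
      (if 2 * ((u + 1 : ℕ) : ℤ) - ((s + 1 : ℕ) : ℤ) = j then (s + 1).choose (u + 1) else 0)
        = (if 2 * (u : ℤ) - (s : ℤ) = j - 1 then s.choose u else 0)
          + (if 2 * ((u + 1 : ℕ) : ℤ) - (s : ℤ) = j + 1 then s.choose (u + 1) else 0) := by
    intro u
    by_cases h : 2 * ((u : ℤ) + 1) - ((s : ℤ) + 1) = j
    · rw [if_pos (by push_cast; omega), if_pos (by omega), if_pos (by push_cast; omega),
        Nat.choose_succ_succ]
    · rw [if_neg (by push_cast; omega), if_neg (by omega), if_neg (by push_cast; omega)]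
  simp only [h1]
  rw [Finset.sum_add_distrib]
  have h2 : ∑ u ∈ Finset.range (s + 1),
      (if 2 * ((u + 1 : ℕ) : ℤ) - (s : ℤ) = j + 1 then s.choose (u + 1) else 0)
        + (if 2 * ((0 : ℕ) : ℤ) - ((s + 1 : ℕ) : ℤ) = j then (s + 1).choose 0 else 0)
      = ∑ u ∈ Finset.range (s + 1), if 2 * (u : ℤ) - (s : ℤ) = j + 1 then s.choose u else 0 := by
    rw [show (if 2 * ((0 : ℕ) : ℤ) - ((s + 1 : ℕ) : ℤ) = j then (s + 1).choose 0 else 0)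
        = (if 2 * ((0 : ℕ) : ℤ) - (s : ℤ) = j + 1 then s.choose 0 else 0) by
      by_cases h : 2 * ((0 : ℕ) : ℤ) - ((s : ℤ) + 1) = j
      · rw [if_pos (by push_cast at h ⊢; omega), if_pos (by push_cast at h ⊢; omega)]
        simp
      · rw [if_neg (by push_cast at h ⊢; omega), if_neg (by push_cast at h ⊢; omega)]]
    rw [← Finset.sum_range_succ' (fun u => if 2 * (u : ℤ) - (s : ℤ) = j + 1 then s.choose u else 0)]
    rw [Finset.sum_range_succ]
    simp [Nat.choose_succ_self]
  omega

theorem tridiagonal_diagonal_entry_formula (a : ℕ → ℕ) (ha : ∀ k : ℕ, 1 ≤ a k)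
    (g : ℕ → ℤ → ℕ)
    (hg0 : g 0 0 = 1) (hg0' : ∀ j : ℤ, j ≠ 0 → g 0 j = 0)
    (hgrec : ∀ (m : ℕ) (j : ℤ), g (m + 1) j = g m (j - 1) + a m * g m j + g m (j + 1)) :
    ∀ m : ℕ, g m 0 =
      ∑ k ∈ Finset.range (m / 2 + 1), (Nat.choose (2 * k) k) *
        ∑ S ∈ (Finset.range m).powersetCard (2 * k),
          ∏ j ∈ (Finset.range m) \ S, a j := by
  -- Main structural lemma
  have main : ∀ (m : ℕ) (j : ℤ), g m j =
      ∑ S ∈ (Finset.range m).powerset, Wfn S.card j * ∏ i ∈ Finset.range m \ S, a i := by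
    intro m
    induction m with
    | zero =>
      intro j
      simp only [Finset.range_zero, Finset.powerset_empty, Finset.sum_singleton,
        Finset.card_empty, Finset.sdiff_empty, Finset.prod_empty, mul_one, Wfn_zero]
      by_cases h : j = 0
      · subst h; simp [hg0]
      · rw [hg0' j h, if_neg h]
    | succ m ih =>
      intro j
      have hm : m ∉ Finset.range m := by simp
      rw [hgrec m j, Finset.range_add_one, Finset.sum_powerset_insert hm]
      have e1 : ∀ S ∈ (Finset.range m).powerset,
          Wfn S.card j * ∏ i ∈ insert m (Finset.range m) \ S, a i
            = a m * (Wfn S.card j * ∏ i ∈ Finset.range m \ S, a i) := by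
        intro S hS
        rw [Finset.mem_powerset] at hS
        have : insert m (Finset.range m) \ S = insert m (Finset.range m \ S) := by
          ext x
          simp only [Finset.mem_sdiff, Finset.mem_insert]
          constructor
          · rintro ⟨(rfl | hx), hxs⟩
            · exact Or.inl rfl
            · exact Or.inr ⟨hx, hxs⟩
          · rintro (rfl | ⟨hx, hxs⟩)
            · exact ⟨Or.inl rfl, fun hxS => hm (hS hxS)⟩
            · exact ⟨Or.inr hx, hxs⟩
        rw [this, Finset.prod_insert (by simp)]
        ring
      have e2 : ∀ S ∈ (Finset.range m).powerset,
          Wfn (insert m S).card j * ∏ i ∈ insert m (Finset.range m) \ insert m S, a i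
            = Wfn S.card (j - 1) * ∏ i ∈ Finset.range m \ S, a i
              + Wfn S.card (j + 1) * ∏ i ∈ Finset.range m \ S, a i := by
        intro S hS
        rw [Finset.mem_powerset] at hS
        have hms : m ∉ S := fun h => hm (hS h)
        have hd : insert m (Finset.range m) \ insert m S = Finset.range m \ S := by
          ext x
          simp only [Finset.mem_sdiff, Finset.mem_insert, not_or]
          constructor
          · rintro ⟨(rfl | hx), hxm, hxs⟩
            · exact absurd rfl hxm
            · exact ⟨hx, hxs⟩
          · rintro ⟨hx, hxs⟩
            exact ⟨Or.inr hx, fun h => hm (h ▸ hx), hxs⟩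
        rw [hd, Finset.card_insert_of_notMem hms, Wfn_succ, add_mul]
      rw [Finset.sum_congr rfl e1, Finset.sum_congr rfl e2, ← Finset.mul_sum,
        Finset.sum_add_distrib, ← ih j, ← ih (j - 1), ← ih (j + 1)]
      ring
  intro m
  rw [main m 0, Finset.sum_powerset]
  have card_range : (Finset.range m).card = m := Finset.card_range m
  rw [card_range]
  -- rewrite inner sums using Wfn s 0
  have step1 : ∀ s ∈ Finset.range (m + 1),
      (∑ S ∈ (Finset.range m).powersetCard s, Wfn S.card 0 * ∏ i ∈ Finset.range m \ S, a i)
        = Wfn s 0 * ∑ S ∈ (Finset.range m).powersetCard s, ∏ i ∈ Finset.range m \ S, a i := by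
    intro s _
    rw [Finset.mul_sum]
    apply Finset.sum_congr rfl
    intro S hS
    rw [(Finset.mem_powersetCard.mp hS).2]
  rw [Finset.sum_congr rfl step1]
  -- Wfn at 0: even case and odd case
  have Weven : ∀ k : ℕ, Wfn (2 * k) 0 = (2 * k).choose k := by
    intro k
    unfold Wfn
    rw [Finset.sum_eq_single k]
    · rw [if_pos (by push_cast; ring)]
    · intro u _ hu
      rw [if_neg (by push_cast; omega)]
    · intro h
      exact absurd (Finset.mem_range.mpr (by omega)) h
  have Wodd : ∀ s : ℕ, ¬ Even s → Wfn s 0 = 0 := by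
    intro s hs
    unfold Wfn
    apply Finset.sum_eq_zero
    intro u _
    rw [if_neg]
    intro h
    exact hs ⟨u, by omega⟩
  -- reindex over even numbers
  rw [show Finset.range (m + 1) = (Finset.range (m / 2 + 1)).image (fun k => 2 * k)
      ∪ ((Finset.range (m + 1)).filter (fun s => ¬ Even s)) by
    ext s
    simp only [Finset.mem_union, Finset.mem_image, Finset.mem_range, Finset.mem_filter,
      Nat.even_iff]
    constructor
    · intro hs
      by_cases he : s % 2 = 0
      · exact Or.inl ⟨s / 2, by omega, by omega⟩
      · exact Or.inr ⟨hs, he⟩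
    · rintro (⟨k, hk, rfl⟩ | ⟨hs, _⟩) <;> omega]
  rw [Finset.sum_union]
  · rw [Finset.sum_image (by intro x _ y _ h; simp only at h; omega)]
    have : ∑ s ∈ (Finset.range (m + 1)).filter (fun s => ¬ Even s),
        Wfn s 0 * ∑ S ∈ (Finset.range m).powersetCard s, ∏ i ∈ Finset.range m \ S, a i = 0 := by
      apply Finset.sum_eq_zero
      intro s hs
      rw [Wodd s (Finset.mem_filter.mp hs).2, zero_mul]
    rw [this, add_zero]
    apply Finset.sum_congr rfl
    intro k _
    rw [Weven]
  · rw [Finset.disjoint_left]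
    intro s hs hs'
    obtain ⟨k, _, rfl⟩ := Finset.mem_image.mp hs
    exact (Finset.mem_filter.mp hs').2 ⟨k, by omega⟩
end

section
/- Let a : ℕ → ℕ satisfy a j ≥ 1 for all j, and assume the function j ↦ 1/(a j : ℝ) is not summable. Fix n ∈ ℕ. For m ∈ ℕ, set Λ = Finset.Ico n (n+m), P m = ∏_{j ∈ Λ} (a j : ℝ)/((a j : ℝ) + 2), E l m = ∑_{S ∈ Λ.powersetCard l} ∏_{j ∈ S} (a j : ℝ)⁻¹, and g m = P m * ∑_{k, 0 ≤ 2k ≤ m} (Nat.choose (2k) k : ℝ) * E (2k) m. Then g m → 0 as m → ∞ if and only if for every l ∈ ℕ, P m * E l m → 0 as m → ∞. -/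
open Filter

private lemma pair_sum (Λ : Finset ℕ) (x : ℕ → ℝ) (l : ℕ) :
    ∑ S ∈ Λ.powersetCard l, ∑ j ∈ Λ \ S, (x j * ∏ i ∈ S, x i)
      = ∑ T ∈ Λ.powersetCard (l + 1), ∑ j ∈ T, ∏ i ∈ T, x i := by
  rw [Finset.sum_sigma', Finset.sum_sigma']
  refine Finset.sum_bij' (fun p _ => (⟨insert p.2 p.1, p.2⟩ : Σ _ : Finset ℕ, ℕ))
    (fun p _ => (⟨p.1.erase p.2, p.2⟩ : Σ _ : Finset ℕ, ℕ)) ?_ ?_ ?_ ?_ ?_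
  · rintro ⟨S, j⟩ hp
    simp only [Finset.mem_sigma, Finset.mem_powersetCard, Finset.mem_sdiff] at hp ⊢
    obtain ⟨⟨hSΛ, hScard⟩, hjΛ, hjS⟩ := hp
    exact ⟨⟨Finset.insert_subset hjΛ hSΛ,
      by rw [Finset.card_insert_of_notMem hjS, hScard]⟩, Finset.mem_insert_self _ _⟩
  · rintro ⟨T, j⟩ hp
    simp only [Finset.mem_sigma, Finset.mem_powersetCard, Finset.mem_sdiff] at hp ⊢
    obtain ⟨⟨hTΛ, hTcard⟩, hjT⟩ := hp
    refine ⟨⟨(Finset.erase_subset _ _).trans hTΛ, ?_⟩, hTΛ hjT, Finset.notMem_erase _ _⟩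
    rw [Finset.card_erase_of_mem hjT, hTcard]
    omega
  · rintro ⟨S, j⟩ hp
    simp only [Finset.mem_sigma, Finset.mem_powersetCard, Finset.mem_sdiff] at hp
    dsimp only
    rw [Finset.erase_insert hp.2.2]
  · rintro ⟨T, j⟩ hp
    simp only [Finset.mem_sigma, Finset.mem_powersetCard] at hp
    dsimp only
    rw [Finset.insert_erase hp.2]
  · rintro ⟨S, j⟩ hp
    simp only [Finset.mem_sigma, Finset.mem_powersetCard, Finset.mem_sdiff] at hp
    rw [Finset.prod_insert hp.2.2]

private lemma esymm_step (Λ : Finset ℕ) (x : ℕ → ℝ) (hx0 : ∀ j, 0 ≤ x j) (hx1 : ∀ j, x j ≤ 1)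
    (l : ℕ) (hl : (2 * l + 1 : ℝ) ≤ ∑ j ∈ Λ, x j) :
    ∑ S ∈ Λ.powersetCard l, ∏ i ∈ S, x i ≤ ∑ T ∈ Λ.powersetCard (l + 1), ∏ i ∈ T, x i := by
  have key := pair_sum Λ x l
  have hr : ∑ T ∈ Λ.powersetCard (l + 1), ∑ j ∈ T, ∏ i ∈ T, x i
      = (l + 1 : ℝ) * ∑ T ∈ Λ.powersetCard (l + 1), ∏ i ∈ T, x i := by
    rw [Finset.mul_sum]
    refine Finset.sum_congr rfl fun T hT => ?_
    obtain ⟨-, hTcard⟩ := Finset.mem_powersetCard.1 hT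
    rw [Finset.sum_const, hTcard, nsmul_eq_mul]
    push_cast
    ring
  have hlhs : (l + 1 : ℝ) * ∑ S ∈ Λ.powersetCard l, ∏ i ∈ S, x i
      ≤ ∑ S ∈ Λ.powersetCard l, ∑ j ∈ Λ \ S, (x j * ∏ i ∈ S, x i) := by
    rw [Finset.mul_sum]
    refine Finset.sum_le_sum fun S hS => ?_
    obtain ⟨hSΛ, hScard⟩ := Finset.mem_powersetCard.1 hS
    have hprod : (0 : ℝ) ≤ ∏ i ∈ S, x i := Finset.prod_nonneg fun i _ => hx0 i
    have h1 : ∑ j ∈ Λ \ S, (x j * ∏ i ∈ S, x i) = (∑ j ∈ Λ \ S, x j) * ∏ i ∈ S, x i := by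
      rw [Finset.sum_mul]
    rw [h1]
    refine mul_le_mul_of_nonneg_right ?_ hprod
    have h2 : ∑ j ∈ Λ \ S, x j = (∑ j ∈ Λ, x j) - ∑ j ∈ S, x j :=
      Finset.sum_sdiff_eq_sub hSΛ
    have h3 : ∑ j ∈ S, x j ≤ (l : ℝ) := by
      have := Finset.sum_le_card_nsmul S x 1 fun j _ => hx1 j
      rw [hScard, nsmul_eq_mul, mul_one] at this
      exact this
    rw [h2]
    linarith
  have h4 : (l + 1 : ℝ) * ∑ S ∈ Λ.powersetCard l, ∏ i ∈ S, x i
      ≤ (l + 1 : ℝ) * ∑ T ∈ Λ.powersetCard (l + 1), ∏ i ∈ T, x i := by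
    rw [← hr, ← key]; exact hlhs
  have hpos : (0 : ℝ) < (l + 1 : ℝ) := by positivity
  exact le_of_mul_le_mul_left h4 hpos

private lemma choose_sq_le (k : ℕ) : (Nat.choose (2 * k) k) ^ 2 * (2 * k + 1) ≤ 16 ^ k := by
  induction k with
  | zero => norm_num
  | succ k ih =>
    have h : (k + 1) * Nat.choose (2 * (k + 1)) (k + 1)
        = 2 * (2 * k + 1) * Nat.choose (2 * k) k := Nat.succ_mul_centralBinom_succ k
    set c := Nat.choose (2 * k) k
    set c1 := Nat.choose (2 * (k + 1)) (k + 1)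
    have key : (k + 1) ^ 2 * (c1 ^ 2 * (2 * (k + 1) + 1)) ≤ (k + 1) ^ 2 * 16 ^ (k + 1) := by
      calc (k + 1) ^ 2 * (c1 ^ 2 * (2 * (k + 1) + 1))
          = ((k + 1) * c1) ^ 2 * (2 * k + 3) := by ring
        _ = (2 * (2 * k + 1) * c) ^ 2 * (2 * k + 3) := by rw [h]
        _ = (2 * k + 1) * (2 * k + 3) * (4 * (2 * k + 1) * c ^ 2) := by ring
        _ ≤ (2 * k + 2) ^ 2 * (4 * (2 * k + 1) * c ^ 2) := by
            apply Nat.mul_le_mul_right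
            nlinarith
        _ = 16 * (k + 1) ^ 2 * (c ^ 2 * (2 * k + 1)) := by ring
        _ ≤ 16 * (k + 1) ^ 2 * 16 ^ k := Nat.mul_le_mul_left _ ih
        _ = (k + 1) ^ 2 * 16 ^ (k + 1) := by ring
    exact Nat.le_of_mul_le_mul_left key (by positivity)

private lemma choose_le_eps (k : ℕ) (ε : ℝ) (hε : 0 < ε) (hk : 1 ≤ ε ^ 2 * (2 * (k : ℝ) + 1)) :
    (Nat.choose (2 * k) k : ℝ) ≤ ε * 4 ^ k := by
  have h := choose_sq_le k
  have hc : ((Nat.choose (2 * k) k : ℝ)) ^ 2 * (2 * (k : ℝ) + 1) ≤ 16 ^ k := by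
    exact_mod_cast h
  have h16 : (16 : ℝ) ^ k = (4 ^ k) ^ 2 := by
    rw [show (16 : ℝ) = 4 ^ 2 by norm_num, ← pow_mul, mul_comm, pow_mul]
  have hC : (0 : ℝ) ≤ (Nat.choose (2 * k) k : ℝ) := Nat.cast_nonneg _
  have h4 : (0 : ℝ) ≤ 4 ^ k := by positivity
  have hsq : ((Nat.choose (2 * k) k : ℝ)) ^ 2 ≤ (ε * 4 ^ k) ^ 2 := by
    have h1 := mul_le_mul_of_nonneg_left hc (sq_nonneg ε)
    have h2 := mul_le_mul_of_nonneg_left hk (sq_nonneg (Nat.choose (2 * k) k : ℝ))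
    rw [h16] at h1
    nlinarith
  nlinarith [mul_nonneg hε.le h4]

private lemma sum_four_le (Λ : Finset ℕ) (x : ℕ → ℝ) (hx : ∀ j, 0 ≤ x j) :
    ∑ k ∈ Finset.range (Λ.card / 2 + 1), 4 ^ k * ∑ S ∈ Λ.powersetCard (2 * k), ∏ j ∈ S, x j
      ≤ ∏ j ∈ Λ, (1 + 2 * x j) := by
  have hexp : ∏ j ∈ Λ, (1 + 2 * x j)
      = ∑ l ∈ Finset.range (Λ.card + 1), 2 ^ l * ∑ S ∈ Λ.powersetCard l, ∏ j ∈ S, x j := by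
    have h1 : ∏ j ∈ Λ, (1 + 2 * x j) = ∏ j ∈ Λ, (2 * x j + 1) := by
      refine Finset.prod_congr rfl fun j _ => by ring
    rw [h1, Finset.prod_add, Finset.powerset_card_disjiUnion,
      Finset.sum_disjiUnion _ _ (Finset.pairwise_disjoint_powersetCard Λ |>.set_pairwise _)]
    refine Finset.sum_congr rfl fun l _ => ?_
    rw [Finset.mul_sum]
    refine Finset.sum_congr rfl fun S hS => ?_
    obtain ⟨-, hcard⟩ := Finset.mem_powersetCard.1 hS
    rw [Finset.prod_const_one, mul_one, Finset.prod_mul_distrib, Finset.prod_const, hcard]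
  rw [hexp]
  have himg : ∑ k ∈ Finset.range (Λ.card / 2 + 1), 4 ^ k * ∑ S ∈ Λ.powersetCard (2 * k), ∏ j ∈ S, x j
      = ∑ l ∈ (Finset.range (Λ.card / 2 + 1)).image (fun k => 2 * k),
          2 ^ l * ∑ S ∈ Λ.powersetCard l, ∏ j ∈ S, x j := by
    rw [Finset.sum_image (by intro a _ b _ hab; dsimp only at hab; omega)]
    refine Finset.sum_congr rfl fun k _ => ?_
    congr 1
    rw [pow_mul]
    norm_num
  rw [himg]
  refine Finset.sum_le_sum_of_subset_of_nonneg ?_ ?_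
  · intro l hl
    simp only [Finset.mem_image, Finset.mem_range] at hl ⊢
    obtain ⟨k, hk, rfl⟩ := hl
    omega
  · intro l _ _
    have : (0 : ℝ) ≤ ∑ S ∈ Λ.powersetCard l, ∏ j ∈ S, x j :=
      Finset.sum_nonneg fun S _ => Finset.prod_nonneg fun j _ => hx j
    positivity

theorem no_invariant_measure_criterion (a : ℕ → ℕ) (ha : ∀ j : ℕ, 1 ≤ a j)
    (hdiv : ¬ Summable fun j : ℕ => 1 / (a j : ℝ)) (n : ℕ)
    (P : ℕ → ℝ) (hP : ∀ m : ℕ, P m = ∏ j ∈ Finset.Ico n (n + m), (a j : ℝ) / ((a j : ℝ) + 2))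
    (E : ℕ → ℕ → ℝ)
    (hE : ∀ l m : ℕ, E l m = ∑ S ∈ (Finset.Ico n (n + m)).powersetCard l,
      ∏ j ∈ S, (a j : ℝ)⁻¹)
    (g : ℕ → ℝ)
    (hg : ∀ m : ℕ, g m = P m * ∑ k ∈ Finset.range (m / 2 + 1),
      (Nat.choose (2 * k) k : ℝ) * E (2 * k) m) :
    Tendsto g atTop (nhds 0) ↔
    ∀ l : ℕ, Tendsto (fun m : ℕ => P m * E l m) atTop (nhds 0) := by
  have hapos : ∀ j, (0 : ℝ) < (a j : ℝ) := fun j => by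
    have := ha j; exact_mod_cast Nat.lt_of_lt_of_le Nat.zero_lt_one (by exact_mod_cast this)
  have hx0 : ∀ j, (0 : ℝ) ≤ ((a j : ℝ))⁻¹ := fun j => (inv_pos.2 (hapos j)).le
  have hx1 : ∀ j, ((a j : ℝ))⁻¹ ≤ 1 := fun j =>
    inv_le_one_of_one_le₀ (by exact_mod_cast ha j)
  have hP0 : ∀ m, 0 ≤ P m := by
    intro m; rw [hP]
    exact Finset.prod_nonneg fun j _ => div_nonneg (hapos j).le (by linarith [hapos j])
  have hE0 : ∀ l m, 0 ≤ E l m := by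
    intro l m; rw [hE]
    exact Finset.sum_nonneg fun S _ => Finset.prod_nonneg fun j _ => hx0 j
  have hPE0 : ∀ l m, 0 ≤ P m * E l m := fun l m => mul_nonneg (hP0 m) (hE0 l m)
  have hg' : ∀ m, g m = ∑ k ∈ Finset.range (m / 2 + 1),
      (Nat.choose (2 * k) k : ℝ) * (P m * E (2 * k) m) := by
    intro m
    rw [hg m, Finset.mul_sum]
    exact Finset.sum_congr rfl fun k _ => by ring
  have hg0 : ∀ m, 0 ≤ g m := by
    intro m; rw [hg']
    exact Finset.sum_nonneg fun k _ =>
      mul_nonneg (Nat.cast_nonneg _) (hPE0 _ m)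
  -- the key uniform bound
  have hbound : ∀ m, ∑ k ∈ Finset.range (m / 2 + 1), 4 ^ k * (P m * E (2 * k) m) ≤ 1 := by
    intro m
    have hcard : (Finset.Ico n (n + m)).card = m := by
      rw [Nat.card_Ico]; omega
    have h1 := sum_four_le (Finset.Ico n (n + m)) (fun j => ((a j : ℝ))⁻¹) hx0
    rw [hcard] at h1
    have hPprod : P m * ∏ j ∈ Finset.Ico n (n + m), (1 + 2 * ((a j : ℝ))⁻¹) = 1 := by
      rw [hP, ← Finset.prod_mul_distrib]
      refine Finset.prod_eq_one fun j _ => ?_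
      have := hapos j
      field_simp
    calc ∑ k ∈ Finset.range (m / 2 + 1), 4 ^ k * (P m * E (2 * k) m)
        = P m * ∑ k ∈ Finset.range (m / 2 + 1),
            4 ^ k * ∑ S ∈ (Finset.Ico n (n + m)).powersetCard (2 * k), ∏ j ∈ S, ((a j : ℝ))⁻¹ := by
          rw [Finset.mul_sum]
          exact Finset.sum_congr rfl fun k _ => by rw [hE]; ring
      _ ≤ P m * ∏ j ∈ Finset.Ico n (n + m), (1 + 2 * ((a j : ℝ))⁻¹) :=
          mul_le_mul_of_nonneg_left h1 (hP0 m)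
      _ = 1 := hPprod
  constructor
  · -- forward direction
    intro hgto
    have heven : ∀ k : ℕ, Tendsto (fun m => P m * E (2 * k) m) atTop (nhds 0) := by
      intro k
      refine squeeze_zero' (Eventually.of_forall fun m => hPE0 _ m) ?_ hgto
      filter_upwards [eventually_ge_atTop (2 * k)] with m hm
      rw [hg' m]
      have hk : k ∈ Finset.range (m / 2 + 1) := by
        rw [Finset.mem_range]; omega
      calc P m * E (2 * k) m
          ≤ (Nat.choose (2 * k) k : ℝ) * (P m * E (2 * k) m) :=
            le_mul_of_one_le_left (hPE0 _ m)
              (by exact_mod_cast Nat.one_le_iff_ne_zero.2 (Nat.choose_pos (by omega)).ne')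
        _ ≤ ∑ k' ∈ Finset.range (m / 2 + 1), (Nat.choose (2 * k') k' : ℝ) * (P m * E (2 * k') m) :=
            Finset.single_le_sum
              (f := fun k' => (Nat.choose (2 * k') k' : ℝ) * (P m * E (2 * k') m))
              (fun i _ => mul_nonneg (Nat.cast_nonneg _) (hPE0 _ m)) hk
    -- divergence of E 1
    have hE1eq : ∀ m, E 1 m = ∑ j ∈ Finset.Ico n (n + m), ((a j : ℝ))⁻¹ := by
      intro m
      rw [hE, Finset.powersetCard_one, Finset.sum_map]
      simp
    have hE1top : Tendsto (fun m => E 1 m) atTop atTop := by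
      have hnn : ∀ j, 0 ≤ 1 / (a j : ℝ) := fun j => by
        rw [one_div]; exact hx0 j
      have hs := (not_summable_iff_tendsto_nat_atTop_of_nonneg hnn).1 hdiv
      have hs' : Tendsto (fun N : ℕ => ∑ j ∈ Finset.range N, ((a j : ℝ))⁻¹) atTop atTop := by
        simpa [one_div] using hs
      have hcomp : Tendsto (fun m : ℕ => ∑ j ∈ Finset.range (n + m), ((a j : ℝ))⁻¹) atTop atTop :=
        hs'.comp (tendsto_atTop_mono (fun m => Nat.le_add_left m n) tendsto_id)
      have heq : (fun m => E 1 m)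
          = fun m => (∑ j ∈ Finset.range (n + m), ((a j : ℝ))⁻¹)
              + (- ∑ j ∈ Finset.range n, ((a j : ℝ))⁻¹) := by
        funext m
        rw [hE1eq, Finset.sum_Ico_eq_sub _ (Nat.le_add_right n m)]
        ring
      rw [heq]
      exact tendsto_atTop_add_const_right _ _ hcomp
    intro l
    rcases Nat.even_or_odd l with ⟨k, hl⟩ | ⟨k, hl⟩
    · have : l = 2 * k := by omega
      rw [this]; exact heven k
    · have hl2 : l = 2 * k + 1 := by omega
      subst hl2
      refine squeeze_zero' (Eventually.of_forall fun m => hPE0 _ m) ?_ (heven (k + 1))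
      · filter_upwards [hE1top.eventually_ge_atTop (2 * (2 * (k : ℝ) + 1) + 1)] with m hm
        have hstep : E (2 * k + 1) m ≤ E (2 * (k + 1)) m := by
          rw [hE, hE]
          have h2 : 2 * (k + 1) = (2 * k + 1) + 1 := by omega
          rw [h2]
          refine esymm_step _ _ hx0 hx1 (2 * k + 1) ?_
          rw [hE1eq] at hm
          push_cast
          push_cast at hm
          linarith
        exact mul_le_mul_of_nonneg_left hstep (hP0 m)
  · -- reverse direction
    intro h
    rw [Metric.tendsto_atTop]
    intro ε hε
    obtain ⟨K, hK⟩ := exists_nat_ge ((2 / ε) ^ 2)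
    have hfin : Tendsto (fun m => ∑ k ∈ Finset.range (K + 1),
        (Nat.choose (2 * k) k : ℝ) * (P m * E (2 * k) m)) atTop (nhds 0) := by
      have := tendsto_finset_sum (Finset.range (K + 1))
        (fun k _ => (h (2 * k)).const_mul ((Nat.choose (2 * k) k : ℝ)))
      simpa using this
    obtain ⟨N1, hN1⟩ := eventually_atTop.1 (hfin.eventually (gt_mem_nhds (half_pos hε)))
    refine ⟨max N1 (2 * K + 2), fun m hm => ?_⟩
    have hm1 : N1 ≤ m := le_trans (le_max_left _ _) hm
    have hm2 : 2 * K + 2 ≤ m := le_trans (le_max_right _ _) hm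
    rw [Real.dist_eq, sub_zero, abs_of_nonneg (hg0 m), hg' m]
    have hKm : K + 1 ≤ m / 2 + 1 := by omega
    rw [← Finset.sum_range_add_sum_Ico _ hKm]
    have htail : ∑ k ∈ Finset.Ico (K + 1) (m / 2 + 1),
        (Nat.choose (2 * k) k : ℝ) * (P m * E (2 * k) m) ≤ ε / 2 := by
      have hstep1 : ∑ k ∈ Finset.Ico (K + 1) (m / 2 + 1),
          (Nat.choose (2 * k) k : ℝ) * (P m * E (2 * k) m)
          ≤ ∑ k ∈ Finset.Ico (K + 1) (m / 2 + 1),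
            (ε / 2) * (4 ^ k * (P m * E (2 * k) m)) := by
        refine Finset.sum_le_sum fun k hk => ?_
        have hkK : K + 1 ≤ k := (Finset.mem_Ico.1 hk).1
        have hchoose : (Nat.choose (2 * k) k : ℝ) ≤ (ε / 2) * 4 ^ k := by
          refine choose_le_eps k (ε / 2) (half_pos hε) ?_
          have hKk : ((2 / ε) ^ 2 : ℝ) ≤ (2 * (k : ℝ) + 1) := by
            have : (K : ℝ) ≤ 2 * (k : ℝ) + 1 := by
              have : (K : ℝ) ≤ (k : ℝ) := by exact_mod_cast le_trans (by omega) hkK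
              linarith [Nat.cast_nonneg (α := ℝ) k]
            linarith
          have hεne : ε ≠ 0 := hε.ne'
          have h1 : (ε / 2) ^ 2 * ((2 / ε) ^ 2) = 1 := by
            field_simp
          calc (1 : ℝ) = (ε / 2) ^ 2 * ((2 / ε) ^ 2) := h1.symm
            _ ≤ (ε / 2) ^ 2 * (2 * (k : ℝ) + 1) :=
                mul_le_mul_of_nonneg_left hKk (sq_nonneg _)
        calc (Nat.choose (2 * k) k : ℝ) * (P m * E (2 * k) m)
            ≤ ((ε / 2) * 4 ^ k) * (P m * E (2 * k) m) :=
              mul_le_mul_of_nonneg_right hchoose (hPE0 _ m)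
          _ = (ε / 2) * (4 ^ k * (P m * E (2 * k) m)) := by ring
      have hstep2 : ∑ k ∈ Finset.Ico (K + 1) (m / 2 + 1), (4 : ℝ) ^ k * (P m * E (2 * k) m)
          ≤ ∑ k ∈ Finset.range (m / 2 + 1), (4 : ℝ) ^ k * (P m * E (2 * k) m) := by
        refine Finset.sum_le_sum_of_subset_of_nonneg ?_ ?_
        · intro i hi
          rw [Finset.mem_range]
          exact (Finset.mem_Ico.1 hi).2
        · intro i _ _
          exact mul_nonneg (by positivity) (hPE0 _ m)
      calc ∑ k ∈ Finset.Ico (K + 1) (m / 2 + 1),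
            (Nat.choose (2 * k) k : ℝ) * (P m * E (2 * k) m)
          ≤ ∑ k ∈ Finset.Ico (K + 1) (m / 2 + 1), (ε / 2) * (4 ^ k * (P m * E (2 * k) m)) :=
            hstep1
        _ = (ε / 2) * ∑ k ∈ Finset.Ico (K + 1) (m / 2 + 1), 4 ^ k * (P m * E (2 * k) m) := by
            rw [Finset.mul_sum]
        _ ≤ (ε / 2) * ∑ k ∈ Finset.range (m / 2 + 1), 4 ^ k * (P m * E (2 * k) m) :=
            mul_le_mul_of_nonneg_left hstep2 (half_pos hε).le
        _ ≤ (ε / 2) * 1 := mul_le_mul_of_nonneg_left (hbound m) (half_pos hε).le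
        _ = ε / 2 := mul_one _
    have hhead := hN1 m hm1
    linarith
end

section
/- Let r, c : ℕ → ℝ and W : ℕ → ℕ satisfy, for all n: 0 < c n, c n ≤ r n, 1 ≤ W n, and (c n) * (W n) ≤ (r n) * (W (n+1)). Then the function n ↦ ((∏_{i ∈ Finset.range n} r i) / (∏_{i ∈ Finset.range (n+1)} c i)) * ((r n) * (W (n+1)) - (c n) * (W n)) is summable if and only if the partial products ∏_{i ∈ Finset.range n} (r i / c i) are bounded above and the sequence n ↦ W n is bounded above. -/
theorem ecs_subdiagram_finite_extension (r c : ℕ → ℝ) (W : ℕ → ℕ)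
    (hc : ∀ n : ℕ, 0 < c n) (hcr : ∀ n : ℕ, c n ≤ r n)
    (hW : ∀ n : ℕ, 1 ≤ W n)
    (hmono : ∀ n : ℕ, c n * (W n : ℝ) ≤ r n * (W (n + 1) : ℝ)) :
    Summable (fun n : ℕ =>
      ((∏ i ∈ Finset.range n, r i) / (∏ i ∈ Finset.range (n + 1), c i)) *
        (r n * (W (n + 1) : ℝ) - c n * (W n : ℝ))) ↔
    ((∃ C : ℝ, ∀ n : ℕ, ∏ i ∈ Finset.range n, (r i / c i) ≤ C) ∧
      (∃ M : ℕ, ∀ n : ℕ, W n ≤ M)) := by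
  have hr : ∀ n, 0 < r n := fun n => lt_of_lt_of_le (hc n) (hcr n)
  set Q : ℕ → ℝ := fun n => ∏ i ∈ Finset.range n, (r i / c i) with hQ
  have hQ1 : ∀ n, 1 ≤ Q n := by
    intro n
    simp only [hQ]
    have h : ∀ i ∈ Finset.range n, (1:ℝ) ≤ r i / c i := by
      intro i _
      rw [le_div_iff₀ (hc i), one_mul]
      exact hcr i
    calc (1:ℝ) = ∏ _i ∈ Finset.range n, (1:ℝ) := by simp
    _ ≤ ∏ i ∈ Finset.range n, r i / c i :=
        Finset.prod_le_prod (by intros; exact zero_le_one) h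
  set f : ℕ → ℝ := fun n => Q n * (W n : ℝ) with hf
  have hf1 : ∀ n, 1 ≤ f n := by
    intro n
    have : (1 : ℝ) ≤ (W n : ℝ) := by exact_mod_cast hW n
    calc (1:ℝ) = 1 * 1 := by ring
    _ ≤ Q n * (W n : ℝ) := by
        apply mul_le_mul (hQ1 n) this zero_le_one (le_trans zero_le_one (hQ1 n))
  set a : ℕ → ℝ := fun n =>
      ((∏ i ∈ Finset.range n, r i) / (∏ i ∈ Finset.range (n + 1), c i)) *
        (r n * (W (n + 1) : ℝ) - c n * (W n : ℝ)) with ha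
  have hcprod : ∀ n, (0:ℝ) < ∏ i ∈ Finset.range n, c i := by
    intro n; exact Finset.prod_pos (fun i _ => hc i)
  have hQprod : ∀ n, Q n = (∏ i ∈ Finset.range n, r i) / (∏ i ∈ Finset.range n, c i) := by
    intro n
    rw [hQ]
    exact Finset.prod_div_distrib (f := r) (g := c)
  have hkey : ∀ n, a n = f (n + 1) - f n := by
    intro n
    simp only [ha, hf, hQprod]
    have hcn : c n ≠ 0 := (hc n).ne'
    have hCn : (∏ i ∈ Finset.range n, c i) ≠ 0 := (hcprod n).ne'
    rw [Finset.prod_range_succ r, Finset.prod_range_succ c]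
    field_simp
  have hanonneg : ∀ n, 0 ≤ a n := by
    intro n
    apply mul_nonneg
    · apply div_nonneg
      · exact Finset.prod_nonneg (fun i _ => (hr i).le)
      · exact (hcprod (n+1)).le
    · linarith [hmono n]
  have hsum : ∀ n, ∑ i ∈ Finset.range n, a i = f n - f 0 := by
    intro n
    calc ∑ i ∈ Finset.range n, a i = ∑ i ∈ Finset.range n, (f (i+1) - f i) := by
          apply Finset.sum_congr rfl; intro i _; exact hkey i
    _ = f n - f 0 := Finset.sum_range_sub f n
  constructor
  · intro hS
    have hbd : ∀ n, f n ≤ f 0 + ∑' i, a i := by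
      intro n
      have := Summable.sum_le_tsum (Finset.range n) (fun i _ => hanonneg i) hS
      rw [hsum n] at this
      linarith
    set C := f 0 + ∑' i, a i with hC
    have hfC : ∀ n, f n ≤ C := hbd
    constructor
    · refine ⟨C, fun n => ?_⟩
      have : (1 : ℝ) ≤ (W n : ℝ) := by exact_mod_cast hW n
      have h0 : 0 ≤ Q n := le_trans zero_le_one (hQ1 n)
      calc Q n = Q n * 1 := by ring
      _ ≤ Q n * (W n : ℝ) := by nlinarith
      _ ≤ C := hfC n
    · refine ⟨⌈C⌉₊, fun n => ?_⟩
      have hWn : (W n : ℝ) ≤ C := by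
        have h0 : (0:ℝ) ≤ (W n : ℝ) := Nat.cast_nonneg _
        calc (W n : ℝ) = 1 * (W n : ℝ) := by ring
        _ ≤ Q n * (W n : ℝ) := by nlinarith [hQ1 n]
        _ ≤ C := hfC n
      exact_mod_cast hWn.trans (Nat.le_ceil C)
  · rintro ⟨⟨C, hCb⟩, ⟨M, hMb⟩⟩
    apply summable_of_sum_range_le hanonneg (c := C * M)
    intro n
    rw [hsum n]
    have hQC : Q n ≤ C := hCb n
    have hWM : (W n : ℝ) ≤ (M : ℝ) := by exact_mod_cast hMb n
    have h0W : (0:ℝ) ≤ (W n : ℝ) := Nat.cast_nonneg _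
    have hfn : f n ≤ C * M := by
      rw [hf]
      apply mul_le_mul hQC hWM h0W (le_trans zero_le_one ((hQ1 n).trans hQC))
    have := hf1 0
    linarith
end
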